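/- Let F be a free group on a finite set X of n generators, and let a finite cyclic group μ_d act on F by automorphisms permuting X without fixed points (no generator is fixed by any nontrivial element of μ_d). Then the fixed subgroup F^{μ_d} is trivial. -/
import Mathlib

open FreeGroup

lemma reduce_map_aux {α : Type*} [DecidableEq α] {f : α → α}
    (hf : Function.Injective f) (L : List (α × Bool)) :
    FreeGroup.reduce (L.map (fun p => (f p.1, p.2))) =
      (FreeGroup.reduce L).map (fun p => (f p.1, p.2)) := by
  induction L with
  | nil => simp
  | cons a L ih =>
    rw [List.map_cons, FreeGroup.reduce.cons, FreeGroup.reduce.cons, ih]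
    cases h : FreeGroup.reduce L with
    | nil => simp
    | cons b M =>
      simp only [List.map_cons]
      by_cases hab : a.1 = b.1 ∧ a.2 = !b.2
      · rw [if_pos ⟨congrArg f hab.1, hab.2⟩, if_pos hab]
      · rw [if_neg (fun h' => hab ⟨hf h'.1, h'.2⟩), if_neg hab]; simp

lemma toWord_map_inj {α : Type*} [DecidableEq α] {f : α → α}
    (hf : Function.Injective f) (w : FreeGroup α) :
    (FreeGroup.map f w).toWord = w.toWord.map (fun p => (f p.1, p.2)) := by
  conv_lhs => rw [← FreeGroup.mk_toWord (x := w)]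
  rw [FreeGroup.map.mk, FreeGroup.toWord_mk, reduce_map_aux hf, FreeGroup.reduce_toWord]

/-- If a finite cyclic group acts on a free group on a finite set `X` of
generators by automorphisms permuting the generators, with no generator fixed by
any nontrivial group element, then the fixed subgroup is trivial. -/
theorem fixed_subgroup_free_trivial {X : Type*} [Fintype X] (n : ℕ)
    (hcard : Fintype.card X = n)
    {G : Type*} [Group G] [Fintype G] [IsCyclic G] (d : ℕ) (hd : Fintype.card G = d)
    (hd1 : 1 < d)
    (φ : G →* MulAut (FreeGroup X))
    (hperm : ∀ g : G, ∀ x : X, ∃ y : X, φ g (FreeGroup.of x) = FreeGroup.of y)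
    (hfree : ∀ g : G, g ≠ 1 → ∀ x : X, φ g (FreeGroup.of x) ≠ FreeGroup.of x) :
    ∀ w : FreeGroup X, (∀ g : G, φ g w = w) → w = 1 := by
  classical
  intro w hw
  by_contra hne
  -- pick a nontrivial group element
  obtain ⟨g, hg⟩ : ∃ g : G, g ≠ 1 := by
    have : 1 < Fintype.card G := hd ▸ hd1
    obtain ⟨g, hg⟩ := Fintype.exists_ne_of_one_lt_card this 1
    exact ⟨g, hg⟩
  -- the permutation induced by g
  set σ : X → X := fun x => Classical.choose (hperm g x) with hσ
  have hσspec : ∀ x, φ g (FreeGroup.of x) = FreeGroup.of (σ x) :=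
    fun x => Classical.choose_spec (hperm g x)
  have hσinj : Function.Injective σ := by
    intro x y h
    have : φ g (FreeGroup.of x) = φ g (FreeGroup.of y) := by
      rw [hσspec, hσspec, h]
    exact FreeGroup.of_injective ((φ g).injective this)
  have hφmap : ∀ v : FreeGroup X, φ g v = FreeGroup.map σ v := by
    intro v
    have : ((φ g).toMonoidHom : FreeGroup X →* FreeGroup X) = FreeGroup.map σ :=
      FreeGroup.ext_hom _ _ (fun x => by simpa using hσspec x)
    exact DFunLike.congr_fun this v
  have hW : w.toWord = w.toWord.map (fun p => (σ p.1, p.2)) := by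
    conv_lhs => rw [← hw g, hφmap, toWord_map_inj hσinj]
  have hnil : w.toWord ≠ [] := fun h => hne (FreeGroup.toWord_eq_nil_iff.mp h)
  obtain ⟨⟨x, b⟩, L, hL⟩ := List.exists_cons_of_ne_nil hnil
  rw [hL, List.map_cons] at hW
  have hx : σ x = x := ((Prod.mk.injEq _ _ _ _).mp (List.head_eq_of_cons_eq hW.symm)).1
  exact hfree g hg x (by rw [hσspec, hx])
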